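/- The definite integral ∫₀^{∞} ( y ρ(y)² + 5 ρ(y) ρ'(y) ) dy equals 6 ln 2 − 57/8. -/

import Mathlib

open Real MeasureTheory Filter

/-- The spike profile `ρ(y) = (3/2) sech²(y/2)`. -/
noncomputable def rho (y : ℝ) : ℝ := (3/2) * (1 / Real.cosh (y/2))^2

lemma rho_eq (y : ℝ) : rho y = 6 * Real.exp y / (Real.exp y + 1)^2 := by
  have h2 : Real.exp (y/2) * Real.exp (y/2) = Real.exp y := by
    rw [← Real.exp_add]; ring_nf
  have hc : Real.cosh (y/2) ≠ 0 := (Real.cosh_pos _).ne'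
  have he : Real.exp (y/2) ≠ 0 := (Real.exp_pos _).ne'
  have he' : Real.exp y + 1 ≠ 0 := by positivity
  unfold rho
  rw [Real.cosh_eq, Real.exp_neg]
  field_simp
  rw [← h2]
  ring

lemma hasDerivAt_rho (y : ℝ) :
    HasDerivAt rho (-(3/2) * Real.sinh (y/2) / Real.cosh (y/2)^3) y := by
  have hc : Real.cosh (y/2) ≠ 0 := (Real.cosh_pos _).ne'
  have h0 : HasDerivAt (fun y : ℝ => y/2) (1/2) y := (hasDerivAt_id y).div_const 2
  have h1 : HasDerivAt (fun y : ℝ => Real.cosh (y/2)) (Real.sinh (y/2) * (1/2)) y := h0.cosh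
  have h2 := ((h1.fun_inv hc).fun_pow 2).const_mul (3/2 : ℝ)
  have hfun : rho = fun y : ℝ => (3/2) * ((Real.cosh (y/2))⁻¹)^2 := by
    funext z; simp [rho, one_div]
  rw [hfun]
  refine h2.congr_deriv ?_
  norm_num
  field_simp

lemma deriv_rho (y : ℝ) :
    deriv rho y = -(3/2) * Real.sinh (y/2) / Real.cosh (y/2)^3 :=
  (hasDerivAt_rho y).deriv

noncomputable def g1 (y : ℝ) : ℝ :=
  -6*y*(3*Real.exp y+1)/(Real.exp y+1)^3 + 6*y - 6*Real.log (Real.exp y+1)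
    + 6*Real.log 2 + 6*Real.exp y/(Real.exp y+1)^2

lemma hasDerivAt_g1 (y : ℝ) : HasDerivAt g1 (y * (rho y)^2) y := by
  have ht : HasDerivAt Real.exp (Real.exp y) y := Real.hasDerivAt_exp y
  have he' : Real.exp y + 1 ≠ 0 := by positivity
  -- term 1
  have hn : HasDerivAt (fun y : ℝ => -6*y*(3*Real.exp y+1))
      ((-6) * (3*Real.exp y+1) + (-6*y) * (3*Real.exp y)) y := by
    have := (((hasDerivAt_id y).const_mul (-6 : ℝ)).fun_mul
      ((ht.const_mul (3:ℝ)).add_const 1))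
    refine this.congr_deriv ?_
    simp only [id_eq]
    try ring
  have hd : HasDerivAt (fun y : ℝ => (Real.exp y+1)^3)
      (3*(Real.exp y+1)^2 * Real.exp y) y := by
    have := (ht.add_const (1:ℝ)).fun_pow 3
    refine this.congr_deriv ?_
    try push_cast
    try ring
  have hA := hn.fun_div hd (by positivity)
  -- term 2
  have hB : HasDerivAt (fun y : ℝ => 6*y) (6:ℝ) y := by
    simpa using (hasDerivAt_id y).const_mul (6:ℝ)
  -- term 3
  have hC : HasDerivAt (fun y : ℝ => 6*Real.log (Real.exp y+1))
      (6 * (Real.exp y / (Real.exp y+1))) y := by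
    exact ((ht.add_const (1:ℝ)).log he').const_mul (6:ℝ)
  -- term 5
  have hE : HasDerivAt (fun y : ℝ => 6*Real.exp y/(Real.exp y+1)^2)
      ((6*Real.exp y * (Real.exp y+1)^2 - 6*Real.exp y * (2*(Real.exp y+1)*Real.exp y))
        / ((Real.exp y+1)^2)^2) y := by
    have hd2 : HasDerivAt (fun y : ℝ => (Real.exp y+1)^2)
        (2*(Real.exp y+1) * Real.exp y) y := by
      have h := (ht.add_const (1:ℝ)).fun_pow 2
      norm_num at h
      convert h using 1
    exact (ht.const_mul (6:ℝ)).div hd2 (by positivity)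
  have H := ((((hA.fun_add hB).fun_sub hC).add_const (6*Real.log 2)).add hE)
  have hgf : g1 = fun y => (-6*y*(3*Real.exp y+1)/(Real.exp y+1)^3 + 6*y
      - 6*Real.log (Real.exp y+1) + 6*Real.log 2) + 6*Real.exp y/(Real.exp y+1)^2 := by
    funext z; unfold g1; ring
  rw [hgf]
  refine H.congr_deriv ?_
  rw [rho_eq]
  field_simp
  ring

lemma tendsto_g1 : Tendsto g1 atTop (nhds (6 * Real.log 2)) := by
  have he : ∀ y : ℝ, Real.exp y + 1 ≠ 0 := fun y => by positivity
  -- A term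
  have hA : Tendsto (fun y : ℝ => -6*y*(3*Real.exp y+1)/(Real.exp y+1)^3) atTop (nhds 0) := by
    have hA' : Tendsto (fun y : ℝ => 6*y*(3*Real.exp y+1)/(Real.exp y+1)^3) atTop (nhds 0) := by
      apply squeeze_zero' (Filter.eventually_atTop.2 ⟨0, fun y hy => by positivity⟩)
        (Filter.eventually_atTop.2 ⟨0, fun y hy => ?_⟩)
      · have := (Real.tendsto_pow_mul_exp_neg_atTop_nhds_zero 1).const_mul (24:ℝ)
        simpa using this
      · have h1 : (1:ℝ) ≤ Real.exp y := Real.one_le_exp hy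
        have he2 : Real.exp y ≠ 0 := (Real.exp_pos y).ne'
        rw [Real.exp_neg, div_le_iff₀ (by positivity)]
        have key : 6*y*(3*Real.exp y+1) * Real.exp y ≤ 24*y*(Real.exp y+1)^3 := by
          nlinarith [mul_nonneg hy (Real.exp_pos y).le, mul_nonneg hy (sq_nonneg (Real.exp y)),
            mul_nonneg (mul_nonneg hy (sq_nonneg (Real.exp y))) (Real.exp_pos y).le]
        calc 6*y*(3*Real.exp y+1) = (6*y*(3*Real.exp y+1) * Real.exp y) * (Real.exp y)⁻¹ := by
              field_simp
          _ ≤ (24*y*(Real.exp y+1)^3) * (Real.exp y)⁻¹ :=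
              mul_le_mul_of_nonneg_right key (by positivity)
          _ = 24 * (y * (Real.exp y)⁻¹) * (Real.exp y+1)^3 := by ring
    have := hA'.neg
    simp only [neg_zero] at this
    refine this.congr (fun y => by ring)
  -- B term
  have hB : Tendsto (fun y : ℝ => 6*y - 6*Real.log (Real.exp y+1)) atTop (nhds 0) := by
    have key : ∀ y : ℝ, 6*y - 6*Real.log (Real.exp y+1) = -6 * Real.log (1 + Real.exp (-y)) := by
      intro y
      have h1 : Real.exp y + 1 = Real.exp y * (1 + Real.exp (-y)) := by
        rw [mul_add, mul_one, ← Real.exp_add]; simp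
      rw [h1, Real.log_mul (Real.exp_pos y).ne' (by positivity), Real.log_exp]; ring
    have h2 : Tendsto (fun y : ℝ => 1 + Real.exp (-y)) atTop (nhds 1) := by
      have := Real.tendsto_exp_neg_atTop_nhds_zero.const_add (1:ℝ)
      simpa using this
    have h3 := (h2.log one_ne_zero).const_mul (-6 : ℝ)
    simp only [Real.log_one, mul_zero] at h3
    exact h3.congr (fun y => (key y).symm)
  -- E term
  have hE : Tendsto (fun y : ℝ => 6*Real.exp y/(Real.exp y+1)^2) atTop (nhds 0) := by
    apply squeeze_zero' (Filter.eventually_atTop.2 ⟨0, fun y hy => by positivity⟩)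
      (Filter.eventually_atTop.2 ⟨0, fun y hy => ?_⟩)
    · have := Real.tendsto_exp_neg_atTop_nhds_zero.const_mul (6:ℝ)
      simpa using this
    · rw [Real.exp_neg, div_le_iff₀ (by positivity)]
      have he2 : Real.exp y ≠ 0 := (Real.exp_pos y).ne'
      have h1 : (1:ℝ) ≤ Real.exp y := Real.one_le_exp hy
      rw [mul_comm (6:ℝ), mul_assoc, mul_comm ((Real.exp y)⁻¹), ← mul_assoc]
      have hi : (Real.exp y)⁻¹ * Real.exp y = 1 := inv_mul_cancel₀ he2
      nlinarith [sq_nonneg (Real.exp y), Real.exp_pos y]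
  have total := ((hA.add hB).add_const (6*Real.log 2)).add hE
  simp only [zero_add, add_zero] at total
  exact total.congr (fun y => by simp [g1]; ring)

lemma rho_zero : rho 0 = 3/2 := by simp [rho]

lemma tendsto_rho : Tendsto rho atTop (nhds 0) := by
  apply squeeze_zero' (Filter.eventually_atTop.2 ⟨0, fun y hy => by rw [rho_eq]; positivity⟩)
    (Filter.eventually_atTop.2 ⟨0, fun y hy => ?_⟩)
  · have := Real.tendsto_exp_neg_atTop_nhds_zero.const_mul (6:ℝ)
    simpa using this
  · rw [rho_eq, Real.exp_neg, div_le_iff₀ (by positivity)]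
    have he2 : Real.exp y ≠ 0 := (Real.exp_pos y).ne'
    have h1 : (1:ℝ) ≤ Real.exp y := Real.one_le_exp hy
    have hi : (Real.exp y)⁻¹ * Real.exp y = 1 := inv_mul_cancel₀ he2
    nlinarith [sq_nonneg (Real.exp y), Real.exp_pos y]

lemma hasDerivAt_g2 (y : ℝ) :
    HasDerivAt (fun y => -(5/2) * (rho y)^2) (-(5 * rho y * deriv rho y)) y := by
  have h := ((hasDerivAt_rho y).fun_pow 2).const_mul (-(5/2) : ℝ)
  refine h.congr_deriv ?_
  rw [deriv_rho]
  push_cast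
  ring

/-- The definite integral `∫₀^∞ ( yρ² + 5ρρ' ) dy = 6 ln 2 − 57/8`. -/
theorem stmt_17 :
    (∫ y in Set.Ioi (0 : ℝ), (y * (rho y)^2 + 5 * rho y * deriv rho y))
      = 6 * Real.log 2 - 57/8 := by
  have hderiv1 : ∀ x ∈ Set.Ici (0:ℝ), HasDerivAt g1 (x * (rho x)^2) x :=
    fun x _ => hasDerivAt_g1 x
  have hpos1 : ∀ x ∈ Set.Ioi (0:ℝ), 0 ≤ x * (rho x)^2 :=
    fun x hx => mul_nonneg (le_of_lt hx) (sq_nonneg _)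
  have key1 := integral_Ioi_of_hasDerivAt_of_nonneg' hderiv1 hpos1 tendsto_g1
  have int1 := integrableOn_Ioi_deriv_of_nonneg' hderiv1 hpos1 tendsto_g1
  have hderiv2 : ∀ x ∈ Set.Ici (0:ℝ),
      HasDerivAt (fun y => -(5/2) * (rho y)^2) (-(5 * rho x * deriv rho x)) x :=
    fun x _ => hasDerivAt_g2 x
  have hpos2 : ∀ x ∈ Set.Ioi (0:ℝ), 0 ≤ -(5 * rho x * deriv rho x) := by
    intro x hx
    rw [deriv_rho]
    have hs : 0 ≤ Real.sinh (x/2) := Real.sinh_nonneg_iff.2 (by linarith [Set.mem_Ioi.1 hx])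
    have hr : 0 ≤ rho x := by rw [rho_eq]; positivity
    have hc : 0 < Real.cosh (x/2) := Real.cosh_pos _
    have : -(3/2) * Real.sinh (x/2) / Real.cosh (x/2)^3 ≤ 0 := by
      apply div_nonpos_of_nonpos_of_nonneg
      · nlinarith
      · positivity
    nlinarith [mul_nonneg hr (neg_nonneg.2 this)]
  have tendsto_g2 : Tendsto (fun y => -(5/2) * (rho y)^2) atTop (nhds 0) := by
    have := (tendsto_rho.pow 2).const_mul (-(5/2) : ℝ)
    simpa using this
  have key2 := integral_Ioi_of_hasDerivAt_of_nonneg' hderiv2 hpos2 tendsto_g2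
  have int2 := integrableOn_Ioi_deriv_of_nonneg' hderiv2 hpos2 tendsto_g2
  have int2' : IntegrableOn (fun y => 5 * rho y * deriv rho y) (Set.Ioi (0:ℝ)) := by
    exact int2.neg.congr (Filter.Eventually.of_forall fun x => by simp)
  rw [MeasureTheory.integral_add int1 int2']
  have e2 : (∫ y in Set.Ioi (0:ℝ), 5 * rho y * deriv rho y)
      = -(∫ y in Set.Ioi (0:ℝ), -(5 * rho y * deriv rho y)) := by
    rw [MeasureTheory.integral_neg]; ring
  rw [key1, e2, key2]
  have hg10 : g1 0 = 3/2 := by simp [g1]; norm_num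
  rw [hg10, rho_zero]
  ring
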